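/- Fix finite sets X, Y, a set S ⊆ X × Y, a function f : S → {0, 1}, ε ∈ [0,1], a real t > 0, a probability distribution σ on X × Y, and a probability distribution μ on X × Y with μ(S) = 1. Assume: (a) for every (x,y) ∈ S, 2μ(x,y) ≥ 0.8·σ(x,y); and (b) for every rectangle R in X × Y and every b ∈ {0,1}, 2μ(R ∩ f⁻¹(b)) ≥ 0.8·σ(R) − 1/t. Then every family w of nonnegative reals w_{R,z} (indexed by rectangles R and z ∈ {0,1}) that is ε-feasible for the relaxed partition bound of f satisfies ∑_{R,z} w_{R,z} ≥ t·(0.8 − 2.8ε). -/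

import Mathlib

open Finset

/-- Membership of an input pair in a rectangle (encoded as a pair of finsets). -/
def MemRect {X Y : Type*} (p : X × Y) (R : Finset X × Finset Y) : Prop :=
  p.1 ∈ R.1 ∧ p.2 ∈ R.2

instance {X Y : Type*} [DecidableEq X] [DecidableEq Y] (p : X × Y) (R : Finset X × Finset Y) :
    Decidable (MemRect p R) := by unfold MemRect; infer_instance

/-- `∑_{R ∋ p} w_{R,z}`. -/
noncomputable def coverSum {X Y Z : Type*} [Fintype X] [Fintype Y]
    [DecidableEq X] [DecidableEq Y]
    (w : Finset X × Finset Y → Z → ℝ) (p : X × Y) (z : Z) : ℝ :=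
  ∑ R ∈ univ.filter (fun R => MemRect p R), w R z

/-- A family `w` is `ε`-feasible for the relaxed partition bound of `f` (valid inputs `S`). -/
def RelaxedFeasible {X Y Z : Type*} [Fintype X] [Fintype Y] [Fintype Z]
    [DecidableEq X] [DecidableEq Y]
    (S : Finset (X × Y)) (f : X × Y → Z) (ε : ℝ)
    (w : Finset X × Finset Y → Z → ℝ) : Prop :=
  (∀ R z, 0 ≤ w R z) ∧
  (∀ p ∈ S, 1 - ε ≤ coverSum w p (f p)) ∧
  (∀ p ∉ S, 1 - ε ≤ ∑ z, coverSum w p z) ∧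
  (∀ p : X × Y, ∑ z, coverSum w p z ≤ 1)

/-- The objective value `∑_{R,z} w_{R,z}`. -/
noncomputable def totalWeight {X Y Z : Type*} [Fintype X] [Fintype Y] [Fintype Z]
    [DecidableEq X] [DecidableEq Y]
    (w : Finset X × Finset Y → Z → ℝ) : ℝ :=
  ∑ R : Finset X × Finset Y, ∑ z : Z, w R z

lemma fin2_ne_iff : ∀ a b : Fin 2, a = b + 1 ↔ ¬ a = b := by decide

/-- The Klartag–Regev-style rectangle inequality implies the lower bound
`t·(0.8 − 2.8 ε)` on the objective value of every `ε`-feasible family for the relaxed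
partition bound. -/
theorem statement_11 {X Y : Type*} [Fintype X] [Fintype Y]
    [DecidableEq X] [DecidableEq Y]
    (S : Finset (X × Y)) (f : X × Y → Fin 2)
    (ε : ℝ) (hε : ε ∈ Set.Icc (0 : ℝ) 1)
    (t : ℝ) (ht : 0 < t)
    (σ μ : X × Y → ℝ)
    (hσ0 : ∀ p, 0 ≤ σ p) (hσ1 : ∑ p, σ p = 1)
    (hμ0 : ∀ p, 0 ≤ μ p) (hμ1 : ∑ p, μ p = 1)
    (hμS : ∑ p ∈ S, μ p = 1)
    (hpt : ∀ p ∈ S, 0.8 * σ p ≤ 2 * μ p)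
    (hrect : ∀ (R : Finset X × Finset Y) (b : Fin 2),
      0.8 * (∑ p ∈ R.1 ×ˢ R.2, σ p) - 1 / t ≤
        2 * ∑ p ∈ (R.1 ×ˢ R.2).filter (fun p => p ∈ S ∧ f p = b), μ p)
    (w : Finset X × Finset Y → Fin 2 → ℝ)
    (hw : RelaxedFeasible S f ε w) :
    t * (0.8 - 2.8 * ε) ≤ totalWeight w := by
  obtain ⟨hε0, hε1⟩ := hε
  obtain ⟨hw0, hwS, hwNS, hw1⟩ := hw
  set F : Fin 2 → X × Y → ℝ := fun z p =>
    if p ∈ S then (if f p = z then 2*t*μ p else 0) else 0.8*t*σ p with hFdef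
  set B : X × Y → ℝ := fun p => if p ∈ S then 2*t*μ p - 0.8*t*σ p else 0 with hBdef
  have hF0 : ∀ z p, 0 ≤ F z p := by
    intro z p
    simp only [hFdef]
    split_ifs <;> first | exact le_rfl | nlinarith [hμ0 p, hσ0 p, ht.le]
  have hB0 : ∀ p, 0 ≤ B p := by
    intro p
    simp only [hBdef]
    split_ifs with hp
    · nlinarith [hpt p hp, ht.le, mul_nonneg ht.le (by linarith [hpt p hp] : (0:ℝ) ≤ 2*μ p - 0.8*σ p)]
    · exact le_rfl
  have hcov0 : ∀ p z, 0 ≤ coverSum w p z := fun p z =>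
    Finset.sum_nonneg fun R _ => hw0 R z
  -- pointwise identity for the dual constraint
  have hkey : ∀ (z : Fin 2) (p : X × Y),
      F z p - B p = 0.8*t*σ p - 2*t*(if p ∈ S ∧ f p = z + 1 then μ p else 0) := by
    intro z p
    simp only [hFdef, hBdef]
    by_cases hp : p ∈ S
    · by_cases hfz : f p = z
      · have h1 : ¬ (f p = z + 1) := fun h => ((fin2_ne_iff (f p) z).1 h) hfz
        simp [hp, hfz, h1]
      · have h1 : f p = z + 1 := (fin2_ne_iff (f p) z).2 hfz
        simp [hp, hfz, h1]
        try ring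
    · simp [hp]
  -- dual feasibility
  have hdual : ∀ (R : Finset X × Finset Y) (z : Fin 2),
      ∑ p ∈ R.1 ×ˢ R.2, (F z p - B p) ≤ 1 := by
    intro R z
    have e1 : ∑ p ∈ R.1 ×ˢ R.2, (F z p - B p)
        = 0.8*t*(∑ p ∈ R.1 ×ˢ R.2, σ p)
          - 2*t*(∑ p ∈ (R.1 ×ˢ R.2).filter (fun p => p ∈ S ∧ f p = z + 1), μ p) := by
      rw [Finset.sum_congr rfl fun p _ => hkey z p, Finset.sum_sub_distrib,
        ← Finset.mul_sum, ← Finset.mul_sum, Finset.sum_filter]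
    have h2 := hrect R (z+1)
    have h3 : t * (0.8 * (∑ p ∈ R.1 ×ˢ R.2, σ p) - 1/t)
        ≤ t * (2 * ∑ p ∈ (R.1 ×ˢ R.2).filter (fun p => p ∈ S ∧ f p = z+1), μ p) :=
      mul_le_mul_of_nonneg_left h2 ht.le
    have h4 : t * (1/t) = 1 := by field_simp
    rw [e1]
    nlinarith [h3, h4]
  -- the swap of summation
  have hset : ∀ R : Finset X × Finset Y,
      R.1 ×ˢ R.2 = univ.filter (fun p : X × Y => MemRect p R) := by
    intro R; ext p; simp only [Finset.mem_product, Finset.mem_filter, Finset.mem_univ, true_and]; rfl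
  have hswap : ∑ R : Finset X × Finset Y, ∑ z, w R z * (∑ p ∈ R.1 ×ˢ R.2, (F z p - B p))
      = ∑ p : X × Y, ∑ z, (F z p - B p) * coverSum w p z := by
    have L1 : ∀ (R : Finset X × Finset Y) (z : Fin 2),
        w R z * (∑ p ∈ R.1 ×ˢ R.2, (F z p - B p))
        = ∑ p : X × Y, (if MemRect p R then w R z * (F z p - B p) else 0) := by
      intro R z
      rw [hset R, Finset.mul_sum, Finset.sum_filter]
    have R1 : ∀ (p : X × Y) (z : Fin 2),
        (F z p - B p) * coverSum w p z
        = ∑ R : Finset X × Finset Y, (if MemRect p R then w R z * (F z p - B p) else 0) := by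
      intro p z
      rw [coverSum, Finset.mul_sum, Finset.sum_filter]
      exact Finset.sum_congr rfl fun R _ => by by_cases h : MemRect p R <;> simp [h, mul_comm]
    calc ∑ R : Finset X × Finset Y, ∑ z, w R z * (∑ p ∈ R.1 ×ˢ R.2, (F z p - B p))
        = ∑ R : Finset X × Finset Y, ∑ z, ∑ p : X × Y,
            (if MemRect p R then w R z * (F z p - B p) else 0) :=
          Finset.sum_congr rfl fun R _ => Finset.sum_congr rfl fun z _ => L1 R z
      _ = ∑ z, ∑ R : Finset X × Finset Y, ∑ p : X × Y,
            (if MemRect p R then w R z * (F z p - B p) else 0) := Finset.sum_comm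
      _ = ∑ z, ∑ p : X × Y, ∑ R : Finset X × Finset Y,
            (if MemRect p R then w R z * (F z p - B p) else 0) :=
          Finset.sum_congr rfl fun z _ => Finset.sum_comm
      _ = ∑ p : X × Y, ∑ z, ∑ R : Finset X × Finset Y,
            (if MemRect p R then w R z * (F z p - B p) else 0) := Finset.sum_comm
      _ = ∑ p : X × Y, ∑ z, (F z p - B p) * coverSum w p z :=
          Finset.sum_congr rfl fun p _ => Finset.sum_congr rfl fun z _ => (R1 p z).symm
  -- per-point lower bound
  have hpb : ∀ p : X × Y,
      (1-ε) * (if p ∈ S then 2*t*μ p else 0.8*t*σ p) - B p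
        ≤ ∑ z, (F z p - B p) * coverSum w p z := by
    intro p
    have e1 : ∑ z, (F z p - B p) * coverSum w p z
        = (∑ z, F z p * coverSum w p z) - B p * ∑ z, coverSum w p z := by
      rw [Finset.mul_sum, ← Finset.sum_sub_distrib]
      exact Finset.sum_congr rfl fun z _ => by ring
    rw [e1]
    have hBle : B p * (∑ z, coverSum w p z) ≤ B p := by
      nlinarith [hB0 p, hw1 p]
    by_cases hp : p ∈ S
    · have h1 : F (f p) p * coverSum w p (f p) ≤ ∑ z, F z p * coverSum w p z :=
        Finset.single_le_sum (fun z _ => mul_nonneg (hF0 z p) (hcov0 p z)) (Finset.mem_univ (f p))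
      have h2 : F (f p) p = 2*t*μ p := by simp [hFdef, hp]
      rw [h2] at h1
      have h3 : 2*t*μ p * (1-ε) ≤ 2*t*μ p * coverSum w p (f p) :=
        mul_le_mul_of_nonneg_left (hwS p hp) (by nlinarith [hμ0 p, ht.le])
      rw [if_pos hp]
      nlinarith [h1, h3, hBle]
    · have hFz : ∀ z, F z p = 0.8*t*σ p := fun z => by simp [hFdef, hp]
      have e2 : ∑ z, F z p * coverSum w p z = 0.8*t*σ p * ∑ z, coverSum w p z := by
        rw [Finset.mul_sum]
        exact Finset.sum_congr rfl fun z _ => by rw [hFz z]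
      have hB' : B p = 0 := by simp [hBdef, hp]
      rw [if_neg hp, e2, hB']
      have h3 : 0.8*t*σ p * (1-ε) ≤ 0.8*t*σ p * ∑ z, coverSum w p z :=
        mul_le_mul_of_nonneg_left (hwNS p hp) (by nlinarith [hσ0 p, ht.le])
      nlinarith [h3]
  -- evaluating the dual objective
  set sσ : ℝ := ∑ p ∈ S, σ p with hsσ
  have hs0 : 0 ≤ sσ := Finset.sum_nonneg fun p _ => hσ0 p
  have hs1 : sσ ≤ 1 := by
    rw [hsσ, ← hσ1]
    exact Finset.sum_le_sum_of_subset_of_nonneg (Finset.subset_univ S) fun p _ _ => hσ0 p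
  have hA : ∑ p : X × Y, (if p ∈ S then 2*t*μ p else 0.8*t*σ p) = 2*t + 0.8*t*(1 - sσ) := by
    have e : ∀ p : X × Y, (if p ∈ S then 2*t*μ p else 0.8*t*σ p)
        = 0.8*t*σ p + (if p ∈ S then 2*t*μ p - 0.8*t*σ p else 0) := by
      intro p; split_ifs <;> ring
    rw [Finset.sum_congr rfl fun p _ => e p, Finset.sum_add_distrib, ← Finset.mul_sum, hσ1]
    have e2 : ∑ p : X × Y, (if p ∈ S then 2*t*μ p - 0.8*t*σ p else 0)
        = ∑ p ∈ S, (2*t*μ p - 0.8*t*σ p) := by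
      rw [Finset.sum_ite_mem, Finset.univ_inter]
    rw [e2, Finset.sum_sub_distrib, ← Finset.mul_sum, ← Finset.mul_sum, hμS, ← hsσ]
    ring
  have hBsum : ∑ p : X × Y, B p = 2*t - 0.8*t*sσ := by
    simp only [hBdef]
    rw [Finset.sum_ite_mem, Finset.univ_inter, Finset.sum_sub_distrib,
      ← Finset.mul_sum, ← Finset.mul_sum, hμS, ← hsσ]
    ring
  have step1 : ∑ p : X × Y, ((1-ε) * (if p ∈ S then 2*t*μ p else 0.8*t*σ p) - B p)
      ≤ ∑ p : X × Y, ∑ z, (F z p - B p) * coverSum w p z :=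
    Finset.sum_le_sum fun p _ => hpb p
  have step2 : ∑ R : Finset X × Finset Y, ∑ z, w R z * (∑ p ∈ R.1 ×ˢ R.2, (F z p - B p))
      ≤ totalWeight w := by
    unfold totalWeight
    refine Finset.sum_le_sum fun R _ => Finset.sum_le_sum fun z _ => ?_
    calc w R z * (∑ p ∈ R.1 ×ˢ R.2, (F z p - B p)) ≤ w R z * 1 :=
          mul_le_mul_of_nonneg_left (hdual R z) (hw0 R z)
      _ = w R z := mul_one _
  have lhs_eval : ∑ p : X × Y, ((1-ε) * (if p ∈ S then 2*t*μ p else 0.8*t*σ p) - B p)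
      = (1-ε) * (2*t + 0.8*t*(1-sσ)) - (2*t - 0.8*t*sσ) := by
    rw [Finset.sum_sub_distrib, ← Finset.mul_sum, hA, hBsum]
  have final : t * (0.8 - 2.8*ε) ≤ (1-ε)*(2*t + 0.8*t*(1-sσ)) - (2*t - 0.8*t*sσ) := by
    nlinarith [mul_nonneg (mul_nonneg ht.le hε0) hs0]
  calc t * (0.8 - 2.8 * ε)
      ≤ (1-ε)*(2*t + 0.8*t*(1-sσ)) - (2*t - 0.8*t*sσ) := final
    _ = ∑ p : X × Y, ((1-ε) * (if p ∈ S then 2*t*μ p else 0.8*t*σ p) - B p) := lhs_eval.symm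
    _ ≤ ∑ p : X × Y, ∑ z, (F z p - B p) * coverSum w p z := step1
    _ = ∑ R : Finset X × Finset Y, ∑ z, w R z * (∑ p ∈ R.1 ×ˢ R.2, (F z p - B p)) := hswap.symm
    _ ≤ totalWeight w := step2
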